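/- For the standard normal target in dimension d, h ∈ (0,2), and any (θ,ρ) ∈ ℝ^{2d}, the Hamiltonian evaluated along the two-sided leapfrog path through (θ,ρ) satisfies, uniformly in i ∈ ℤ: (1/2)((1 − h²/4)|θ|² + |ρ|²) ≤ H(Φ_h^i(θ,ρ)) ≤ (1/2)(|θ|² + (1 − h²/4)^{−1}|ρ|²). -/

import Mathlib

open MeasureTheory

noncomputable section

/-! ### Combinatorial definitions for NUTS orbit selection -/

/-- Floor midpoint `⌊(a+b)/2⌋`. -/
def mid (a b : ℤ) : ℤ := (a + b) / 2

/-- `(−1)^x` for a bit `x`. -/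
def signBit (x : Bool) : ℤ := if x then -1 else 1

/-- Left endpoint `a_ℓ(B)` of the orbit built from the Bernoulli directions `B` (1-indexed). -/
def aEnd (B : ℕ → Bool) : ℕ → ℤ
  | 0 => 0
  | ℓ + 1 => min (aEnd B ℓ) (aEnd B ℓ + signBit (B (ℓ + 1)) * 2 ^ ℓ)

/-- Right endpoint `b_ℓ(B)`. -/
def bEnd (B : ℕ → Bool) : ℕ → ℤ
  | 0 => 0
  | ℓ + 1 => max (bEnd B ℓ) (bEnd B ℓ + signBit (B (ℓ + 1)) * 2 ^ ℓ)

/-- Proposed extension endpoint `ã_ℓ(B) = a_{ℓ−1}(B) + (−1)^{B_ℓ} 2^{ℓ−1}` (for `ℓ ≥ 1`). -/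
def aT (B : ℕ → Bool) (ℓ : ℕ) : ℤ := aEnd B (ℓ - 1) + signBit (B ℓ) * 2 ^ (ℓ - 1)

/-- Proposed extension endpoint `b̃_ℓ(B) = b_{ℓ−1}(B) + (−1)^{B_ℓ} 2^{ℓ−1}` (for `ℓ ≥ 1`). -/
def bT (B : ℕ → Bool) (ℓ : ℕ) : ℤ := bEnd B (ℓ - 1) + signBit (B ℓ) * 2 ^ (ℓ - 1)

/-- The binary string `β(L,a,b)`: `beta ℓ L a b i` is the `i`-th bit (1-indexed) of
`(β_i(L,a,b))_{i ∈ [1:ℓ]}`, where `[a:b]` is an interval with `b − a + 1 = 2^ℓ`. -/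
def beta : ℕ → ℤ → ℤ → ℤ → ℕ → Bool
  | 0, _, _, _, _ => false
  | ℓ + 1, L, a, b, i =>
      if i = ℓ + 1 then decide (mid a b + 1 ≤ L)
      else if mid a b + 1 ≤ L then beta ℓ L (mid a b + 1) b i
      else beta ℓ L a (mid a b) i

/-- The transformed sequence `B*(L,a,b,B)`: bits `1..ℓ` come from `β(L,a,b)`, the rest from `B`. -/
def bstar (ℓ : ℕ) (L a b : ℤ) (B : ℕ → Bool) : ℕ → Bool :=
  fun i => if 1 ≤ i ∧ i ≤ ℓ then beta ℓ L a b i else B i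

/-- The domain `D`: tuples `(B, ℓ, a, b, L)` with `ℓ ∈ [1:M]`, `a = a_ℓ(B)`, `b = b_ℓ(B)`,
`a ≤ L ≤ b`. -/
def memD (M : ℕ) (B : ℕ → Bool) (ℓ : ℕ) (a b L : ℤ) : Prop :=
  1 ≤ ℓ ∧ ℓ ≤ M ∧ a = aEnd B ℓ ∧ b = bEnd B ℓ ∧ a ≤ L ∧ L ≤ b

/-- The levels of the binary tree of subintervals of `[a:b]`: `treeLevel a b k` is the family of
intervals (coded as pairs) obtained from `[a:b]` by `k` successive halvings; with
`b − a + 1 = 2^ℓ` this is `T_{ℓ−k}([a:b])` of the paper. -/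
def treeLevel (a b : ℤ) : ℕ → Set (ℤ × ℤ)
  | 0 => {(a, b)}
  | k + 1 => {p | ∃ q ∈ treeLevel a b k,
      p = (q.1, mid q.1 q.2) ∨ p = (mid q.1 q.2 + 1, q.2)}

/-- The binary tree `T([a:b]) = ∪_{j=0}^{ℓ} T_j([a:b])` of subintervals of an interval `[a:b]`
with `b − a + 1 = 2^ℓ`. -/
def tree (ℓ : ℕ) (a b : ℤ) : Set (ℤ × ℤ) := ⋃ k ≤ ℓ, treeLevel a b k

/-! ### Leapfrog dynamics -/

/-- The state space `ℝ^d`. -/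
abbrev ES (d : ℕ) := EuclideanSpace ℝ (Fin d)

/-- The momentum flip `S(θ,ρ) = (θ,−ρ)`. -/
def flipMom {d : ℕ} (p : ES d × ES d) : ES d × ES d := (p.1, -p.2)

/-- One leapfrog step of size `h` for the potential `U`. -/
def leapfrog {d : ℕ} (U : ES d → ℝ) (h : ℝ) (p : ES d × ES d) : ES d × ES d :=
  let ρh := p.2 - (h / 2) • gradient U p.1
  let θ' := p.1 + h • ρh
  (θ', ρh - (h / 2) • gradient U θ')

/-- Integer iterates `Φ_h^i`, `i ∈ ℤ`, of the leapfrog integrator (negative iterates use the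
inverse `S ∘ Φ_h ∘ S`). -/
def leapfrogIter {d : ℕ} (U : ES d → ℝ) (h : ℝ) : ℤ → ES d × ES d → ES d × ES d
  | Int.ofNat n => (leapfrog U h)^[n]
  | Int.negSucc n => (flipMom ∘ leapfrog U h ∘ flipMom)^[n + 1]

/-- The Hamiltonian `H(θ,ρ) = U(θ) + |ρ|²/2`. -/
def Ham {d : ℕ} (U : ES d → ℝ) (p : ES d × ES d) : ℝ := U p.1 + (1 / 2) * ‖p.2‖ ^ 2

open Classical in
/-- The U-turn indicator `𝟙_Uturn(a,b,θ,ρ,h,R)` (coarse step size `hs`, fine step `hs/R`). -/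
def uturnInd {d : ℕ} (U : ES d → ℝ) (hs : ℝ) (R : ℕ) (a b : ℤ) (p : ES d × ES d) : ℕ :=
  let qm := leapfrogIter U (hs / R) (R * a) p
  let qp := leapfrogIter U (hs / R) (R * b) p
  if (inner ℝ qp.2 (qp.1 - qm.1) : ℝ) < 0 ∨ (inner ℝ qm.2 (qp.1 - qm.1) : ℝ) < 0 then 1 else 0

/-- The sub-U-turn indicator `𝟙_subUturn(a,b,θ,ρ,h,R)`, defined recursively by halving. -/
def subUturnInd {d : ℕ} (U : ES d → ℝ) (hs : ℝ) (R : ℕ) (p : ES d × ES d) (a b : ℤ) : ℕ :=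
  if h : a < b then
    max (max (subUturnInd U hs R p a (mid a b)) (subUturnInd U hs R p (mid a b + 1) b))
      (uturnInd U hs R a b p)
  else 0
termination_by (b - a).toNat
decreasing_by
  · have h1 : a ≤ mid a b := by unfold mid; omega
    have h2 : mid a b < b := by unfold mid; omega
    omega
  · have h1 : a ≤ mid a b := by unfold mid; omega
    have h2 : mid a b < b := by unfold mid; omega
    omega

/-- The number of doublings `ℓ_min(θ,ρ,B,h,R)` selected by the no-U-turn procedure with at most
`2^M` leapfrog iterates. -/
def ellMin {d : ℕ} (U : ES d → ℝ) (hs : ℝ) (R : ℕ) (M : ℕ) (B : ℕ → Bool)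
    (p : ES d × ES d) : ℕ :=
  sInf ({ℓ | 1 ≤ ℓ ∧ ℓ ≤ M - 1 ∧
      (uturnInd U hs R (aEnd B ℓ) (bEnd B ℓ) p = 1 ∨
        subUturnInd U hs R p (aT B (ℓ + 1)) (bT B (ℓ + 1)) = 1)} ∪ {M})

/-- The categorical (Boltzmann) index-selection kernel `Q(L | θ, ρ, a, b, h, R)`. -/
def Qkernel {d : ℕ} (U : ES d → ℝ) (hs : ℝ) (R : ℕ) (p : ES d × ES d)
    (a b L : ℤ) : ℝ :=
  if a ≤ L ∧ L ≤ b then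
    Real.exp (-Ham U (leapfrogIter U (hs / R) (R * L) p)) /
      ∑ k ∈ Finset.Icc a b, Real.exp (-Ham U (leapfrogIter U (hs / R) (R * k) p))
  else 0

/-! ### The standard normal target -/

/-- One leapfrog step of size `h` for the standard normal potential `U(θ) = |θ|²/2`
(for which `∇U(θ) = θ`). -/
def gaussLeapfrog {d : ℕ} (h : ℝ) (p : ES d × ES d) : ES d × ES d :=
  let ρh := p.2 - (h / 2) • p.1
  let θ' := p.1 + h • ρh
  (θ', ρh - (h / 2) • θ')

/-- Integer iterates of the standard normal leapfrog integrator. -/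
def gaussLeapfrogIter {d : ℕ} (h : ℝ) : ℤ → ES d × ES d → ES d × ES d
  | Int.ofNat n => (gaussLeapfrog h)^[n]
  | Int.negSucc n => (flipMom ∘ gaussLeapfrog h ∘ flipMom)^[n + 1]

/-- The standard normal Hamiltonian `H(θ,ρ) = (|θ|² + |ρ|²)/2`. -/
def gaussHam {d : ℕ} (p : ES d × ES d) : ℝ := (1 / 2) * (‖p.1‖ ^ 2 + ‖p.2‖ ^ 2)

/-- The modified Hamiltonian `H_h(θ,ρ) = (1 − h²/4)|θ|²/2 + |ρ|²/2` preserved by the standard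
normal leapfrog integrator for `h ∈ (0,2)`. -/
def gaussHamMod {d : ℕ} (h : ℝ) (p : ES d × ES d) : ℝ :=
  (1 / 2) * (1 - h ^ 2 / 4) * ‖p.1‖ ^ 2 + (1 / 2) * ‖p.2‖ ^ 2

end
lemma norm_smul_add_smul_sq {d : ℕ} (a b : ℝ) (x y : ES d) :
    ‖a • x + b • y‖^2 = a^2*‖x‖^2 + 2*a*b*(inner ℝ x y : ℝ) + b^2*‖y‖^2 := by
  rw [norm_add_sq_real, norm_smul, norm_smul, real_inner_smul_left, real_inner_smul_right,
    mul_pow, mul_pow, Real.norm_eq_abs, Real.norm_eq_abs, sq_abs, sq_abs]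
  ring

lemma gaussHamMod_leapfrog {d : ℕ} (h : ℝ) (p : ES d × ES d) :
    gaussHamMod h (gaussLeapfrog h p) = gaussHamMod h p := by
  have hθ : (gaussLeapfrog h p).1 = (1 - h^2/2) • p.1 + h • p.2 := by
    simp only [gaussLeapfrog, smul_sub, smul_smul]
    module
  have hρ : (gaussLeapfrog h p).2 = (-(h - h^3/4)) • p.1 + (1 - h^2/2) • p.2 := by
    simp only [gaussLeapfrog, smul_add, smul_sub, smul_smul]
    module
  unfold gaussHamMod
  rw [hθ, hρ, norm_smul_add_smul_sq, norm_smul_add_smul_sq]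
  ring

lemma gaussHamMod_flipMom {d : ℕ} (h : ℝ) (p : ES d × ES d) :
    gaussHamMod h (flipMom p) = gaussHamMod h p := by
  simp [gaussHamMod, flipMom]

lemma gaussHamMod_iter {d : ℕ} (h : ℝ) (p : ES d × ES d) (i : ℤ) :
    gaussHamMod h (gaussLeapfrogIter h i p) = gaussHamMod h p := by
  cases i with
  | ofNat n =>
    induction n with
    | zero => simp [gaussLeapfrogIter]
    | succ n ih =>
      show gaussHamMod h ((gaussLeapfrog h)^[n+1] p) = _
      rw [Function.iterate_succ_apply', gaussHamMod_leapfrog]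
      exact ih
  | negSucc n =>
    show gaussHamMod h ((flipMom ∘ gaussLeapfrog h ∘ flipMom)^[n+1] p) = _
    induction n with
    | zero =>
      simp [Function.comp, gaussHamMod_flipMom, gaussHamMod_leapfrog]
    | succ n ih =>
      rw [Function.iterate_succ_apply']
      simp only [Function.comp_apply, gaussHamMod_flipMom, gaussHamMod_leapfrog]
      exact ih

/-- For the standard normal target and `h ∈ (0,2)`, the Hamiltonian along the
two-sided leapfrog path through `(θ,ρ)` satisfies, uniformly in `i ∈ ℤ`,
`((1 − h²/4)|θ|² + |ρ|²)/2 ≤ H(Φ_h^i(θ,ρ)) ≤ (|θ|² + (1 − h²/4)⁻¹|ρ|²)/2`. -/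
theorem gaussHam_bounds_along_path {d : ℕ} (h : ℝ) (h0 : 0 < h) (h2 : h < 2)
    (p : ES d × ES d) :
    ∀ i : ℤ,
      (1 / 2) * ((1 - h ^ 2 / 4) * ‖p.1‖ ^ 2 + ‖p.2‖ ^ 2) ≤
          gaussHam (gaussLeapfrogIter h i p) ∧
      gaussHam (gaussLeapfrogIter h i p) ≤
          (1 / 2) * (‖p.1‖ ^ 2 + (1 - h ^ 2 / 4)⁻¹ * ‖p.2‖ ^ 2) := by
  intro i
  have hc : (0:ℝ) < 1 - h^2/4 := by nlinarith
  have key := gaussHamMod_iter h p i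
  set q := gaussLeapfrogIter h i p with hq
  have hkey : (1/2) * (1 - h^2/4) * ‖q.1‖^2 + (1/2) * ‖q.2‖^2
      = (1/2) * (1 - h^2/4) * ‖p.1‖^2 + (1/2) * ‖p.2‖^2 := key
  have h1 : (0:ℝ) ≤ ‖q.1‖^2 := sq_nonneg _
  have h2' : (0:ℝ) ≤ ‖q.2‖^2 := sq_nonneg _
  constructor
  · show _ ≤ (1/2) * (‖q.1‖^2 + ‖q.2‖^2)
    nlinarith
  · show (1/2) * (‖q.1‖^2 + ‖q.2‖^2) ≤ _
    have hinv : (1 - h^2/4) * (1 - h^2/4)⁻¹ = 1 := mul_inv_cancel₀ hc.ne'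
    rw [← mul_le_mul_iff_right₀ hc]
    nlinarith [mul_nonneg (sq_nonneg h) h2']
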